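/- Let V_0 = λI_d with λ > 0, and suppose V_m is positive definite with det(V_m) = 2^m λ^d and tr(V_m) ≤ dλ + ∑_{k=1}^m L²/ε_k² for some L > 0 and ε_k > 0. Then ∑_{k=1}^m 1/ε_k² ≥ (dλ/L²)(2^{m/d} − 1). -/

import Mathlib

theorem statement_15 (d m : ℕ) (hd : 1 ≤ d) (lam L : ℝ) (hlam : 0 < lam) (hL : 0 < L)
    (V : Matrix (Fin d) (Fin d) ℝ) (hV : V.PosDef)
    (ε : ℕ → ℝ) (hε : ∀ k, 0 < ε k)
    (hdet : V.det = 2 ^ m * lam ^ d)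
    (htr : V.trace ≤ d * lam + ∑ k ∈ Finset.range m, L ^ 2 / ε k ^ 2) :
    ∑ k ∈ Finset.range m, 1 / ε k ^ 2 ≥
      (d * lam / L ^ 2) * ((2 : ℝ) ^ ((m : ℝ) / d) - 1) := by
  have hH := hV.1
  have hdpos : (0:ℝ) < d := by exact_mod_cast hd
  -- trace = sum of eigenvalues
  have htrace : V.trace = ∑ i, hH.eigenvalues i := by
    conv_lhs => rw [hH.spectral_theorem]
    rw [Unitary.conjStarAlgAut_apply]
    rw [Matrix.trace_mul_cycle]
    rw [Matrix.UnitaryGroup.star_mul_self, one_mul]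
    simp [Matrix.trace_diagonal]
  have hdet' : V.det = ∏ i, hH.eigenvalues i := by
    simpa using hH.det_eq_prod_eigenvalues
  have hev : ∀ i, 0 < hH.eigenvalues i := hV.eigenvalues_pos
  -- AM-GM
  have hamgm := Real.geom_mean_le_arith_mean (Finset.univ : Finset (Fin d))
    (fun _ => 1) hH.eigenvalues (fun i _ => zero_le_one) (by simpa using hdpos)
    (fun i _ => (hev i).le)
  simp only [Real.rpow_one, Finset.sum_const, Finset.card_univ, Fintype.card_fin,
    nsmul_eq_mul, mul_one, one_mul] at hamgm
  rw [← hdet', ← htrace, hdet] at hamgm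
  -- compute ((2:ℝ)^m * lam^d)^(d⁻¹)
  have hkey : ((2:ℝ) ^ m * lam ^ d) ^ ((d:ℝ))⁻¹ = (2:ℝ) ^ ((m:ℝ)/d) * lam := by
    rw [Real.mul_rpow (by positivity) (by positivity),
      ← Real.rpow_natCast (2:ℝ) m, ← Real.rpow_natCast lam d,
      ← Real.rpow_mul (by norm_num), ← Real.rpow_mul hlam.le]
    rw [mul_inv_cancel₀ (ne_of_gt hdpos), Real.rpow_one, div_eq_mul_inv]
  rw [hkey] at hamgm
  have h1 : (d:ℝ) * (2:ℝ) ^ ((m:ℝ)/d) * lam ≤ V.trace := by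
    rw [le_div_iff₀ hdpos] at hamgm
    linarith [hamgm]
  have h2 : ∑ k ∈ Finset.range m, L ^ 2 / ε k ^ 2
      = L ^ 2 * ∑ k ∈ Finset.range m, 1 / ε k ^ 2 := by
    rw [Finset.mul_sum]; exact Finset.sum_congr rfl fun k _ => by ring
  rw [h2] at htr
  have hL2 : (0:ℝ) < L ^ 2 := by positivity
  rw [ge_iff_le, div_mul_eq_mul_div, div_le_iff₀ hL2]
  nlinarith [h1, htr]
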